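/- For every integer N ≥ 2, all indices 1 ≤ i, j ≤ N−1, and every smooth complex-valued function f of the variables T_{k,i}, the Gauss–Givental operators satisfy E_{i,i+1}(E_{j+1,j} f) − E_{j+1,j}(E_{i,i+1} f) = δ_{i,j} · ( E_{i,i} f − E_{i+1,i+1} f ). -/

import Mathlib

noncomputable section

/-- Value of the variable `T_{k,i}` (1-based indices), with the convention that
`T_{k,i} = 0` whenever `(k,i)` does not satisfy `1 ≤ i ≤ k ≤ N-1`
(in particular `T_{N,i} = 0`). -/
def tv (N : ℕ) (T : (Fin N × Fin N) → ℝ) (k i : ℕ) : ℝ :=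
  if h : 1 ≤ i ∧ i ≤ k ∧ k ≤ N - 1 then T (⟨k - 1, by omega⟩, ⟨i - 1, by omega⟩) else 0

/-- Partial derivative `∂f/∂T_{k,i}` (1-based indices), with the convention that it is
zero whenever `(k,i)` does not satisfy `1 ≤ i ≤ k ≤ N-1`. -/
def pd (N : ℕ) (f : ((Fin N × Fin N) → ℝ) → ℂ) (k i : ℕ) (T : (Fin N × Fin N) → ℝ) : ℂ :=
  if h : 1 ≤ i ∧ i ≤ k ∧ k ≤ N - 1 then
    fderiv ℝ f T (Pi.single ((⟨k - 1, by omega⟩ : Fin N), (⟨i - 1, by omega⟩ : Fin N)) 1)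
  else 0

/-- The Gauss–Givental Cartan operator `E_{i,i}`. -/
def Ed (N : ℕ) (μ : ℕ → ℂ) (i : ℕ) (f : ((Fin N × Fin N) → ℝ) → ℂ)
    (T : (Fin N × Fin N) → ℝ) : ℂ :=
  μ i * f T + ∑ k ∈ Finset.Icc 1 (i - 1), pd N f (N + k - i) k T
    - ∑ k ∈ Finset.Icc i (N - 1), pd N f k i T

/-- The Gauss–Givental raising operator `E_{i,i+1}`. -/
def Er (N : ℕ) (i : ℕ) (f : ((Fin N × Fin N) → ℝ) → ℂ) (T : (Fin N × Fin N) → ℝ) : ℂ :=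
  ∑ n ∈ Finset.Icc 1 i,
    (∑ k ∈ Finset.Icc n i, (Real.exp (tv N T (N + k - i) k - tv N T (N + k - i - 1) k) : ℂ)) *
      (pd N f (N + n - i - 1) n T - pd N f (N + n - i - 1) (n - 1) T)

/-- The Gauss–Givental lowering operator `E_{i+1,i}`. -/
def El (N : ℕ) (μ : ℕ → ℂ) (i : ℕ) (f : ((Fin N × Fin N) → ℝ) → ℂ)
    (T : (Fin N × Fin N) → ℝ) : ℂ :=
  ∑ k ∈ Finset.Icc i (N - 1),
    (Real.exp (tv N T k i - tv N T (k + 1) (i + 1)) : ℂ) *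
      ((μ i - μ (i + 1)) * f T + ∑ s ∈ Finset.Icc i k, (pd N f s (i + 1) T - pd N f s i T))

namespace GGaux

abbrev ES (N : ℕ) := (Fin N × Fin N) → ℝ

def vec (N k i : ℕ) : ES N :=
  if h : 1 ≤ i ∧ i ≤ k ∧ k ≤ N - 1 then
    Pi.single ((⟨k - 1, by omega⟩ : Fin N), (⟨i - 1, by omega⟩ : Fin N)) 1 else 0

def tvL (N k i : ℕ) : ES N →L[ℝ] ℝ :=
  if h : 1 ≤ i ∧ i ≤ k ∧ k ≤ N - 1 then
    ContinuousLinearMap.proj ((⟨k - 1, by omega⟩ : Fin N), (⟨i - 1, by omega⟩ : Fin N)) else 0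

lemma tv_eq (N : ℕ) (T : ES N) (k i : ℕ) : tv N T k i = tvL N k i T := by
  unfold tv tvL
  by_cases h : 1 ≤ i ∧ i ≤ k ∧ k ≤ N - 1
  · rw [dif_pos h, dif_pos h]; rfl
  · rw [dif_neg h, dif_neg h]; rfl

lemma pd_eq (N : ℕ) (g : ES N → ℂ) (k i : ℕ) (T : ES N) :
    pd N g k i T = fderiv ℝ g T (vec N k i) := by
  unfold pd vec
  by_cases h : 1 ≤ i ∧ i ≤ k ∧ k ≤ N - 1
  · rw [dif_pos h, dif_pos h]
  · rw [dif_neg h, dif_neg h, map_zero]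

lemma tvL_invalid (N k i : ℕ) (h : ¬(1 ≤ i ∧ i ≤ k ∧ k ≤ N - 1)) : tvL N k i = 0 := dif_neg h

lemma vec_invalid (N k i : ℕ) (h : ¬(1 ≤ i ∧ i ≤ k ∧ k ≤ N - 1)) : vec N k i = 0 := dif_neg h

lemma tvL_vec (N a b c d : ℕ) :
    tvL N a b (vec N c d) =
      if a = c ∧ b = d ∧ 1 ≤ b ∧ b ≤ a ∧ a ≤ N - 1 then 1 else 0 := by
  unfold tvL vec
  by_cases h1 : 1 ≤ b ∧ b ≤ a ∧ a ≤ N - 1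
  · rw [dif_pos h1]
    by_cases h2 : 1 ≤ d ∧ d ≤ c ∧ c ≤ N - 1
    · rw [dif_pos h2, ContinuousLinearMap.proj_apply, Pi.single_apply]
      have hiff : (((⟨a - 1, by omega⟩ : Fin N), (⟨b - 1, by omega⟩ : Fin N))
          = ((⟨c - 1, by omega⟩ : Fin N), (⟨d - 1, by omega⟩ : Fin N))) ↔ (a = c ∧ b = d) := by
        rw [Prod.mk.injEq, Fin.mk.injEq, Fin.mk.injEq]
        omega
      by_cases h3 : a = c ∧ b = d
      · rw [if_pos (hiff.mpr h3), if_pos ⟨h3.1, h3.2, h1⟩]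
      · rw [if_neg (fun hh => h3 (hiff.mp hh)), if_neg (fun hh => h3 ⟨hh.1, hh.2.1⟩)]
    · rw [dif_neg h2, map_zero, if_neg]
      rintro ⟨rfl, rfl, hh⟩
      exact h2 hh
  · rw [dif_neg h1, ContinuousLinearMap.zero_apply, if_neg]
    rintro ⟨-, -, hh⟩
    exact h1 hh

/-- sum over `Icc a b` splitting off the bottom element. -/
lemma sum_Icc_bot {M : Type*} [AddCommMonoid M] {a b : ℕ} (h : a ≤ b) (g : ℕ → M) :
    ∑ k ∈ Finset.Icc a b, g k = g a + ∑ k ∈ Finset.Icc (a + 1) b, g k := by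
  have he : Finset.Icc a b = insert a (Finset.Icc (a + 1) b) := by
    ext x; simp only [Finset.mem_Icc, Finset.mem_insert]; omega
  rw [he, Finset.sum_insert (by simp only [Finset.mem_Icc]; omega)]

lemma sum_ite_ge {M : Type*} [AddCommMonoid M] (m j a : ℕ) (h : j ≤ a) (F : ℕ → M) :
    ∑ k ∈ Finset.Icc j m, (if a ≤ k then F k else 0) = ∑ k ∈ Finset.Icc a m, F k := by
  rw [← Finset.sum_filter]
  apply Finset.sum_congr _ (fun _ _ => rfl)
  ext k
  simp only [Finset.mem_filter, Finset.mem_Icc]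
  omega

lemma sum_ite_le {M : Type*} [AddCommMonoid M] (m a : ℕ) (h : a ≤ m) (F : ℕ → M) :
    ∑ k ∈ Finset.Icc 1 m, (if k ≤ a then F k else 0) = ∑ k ∈ Finset.Icc 1 a, F k := by
  rw [← Finset.sum_filter]
  apply Finset.sum_congr _ (fun _ _ => rfl)
  ext k
  simp only [Finset.mem_filter, Finset.mem_Icc]
  omega

end GGaux

namespace GGaux

variable {N : ℕ}

/-- `E_k` exponential factors appearing in `Er`. -/
def Ee (N i : ℕ) (T : ES N) (n : ℕ) : ℝ :=
  Real.exp (tvL N (N + n - i) n T - tvL N (N + n - i - 1) n T)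

/-- Coefficients of `Er`. -/
def Cc (N i : ℕ) (T : ES N) (n : ℕ) : ℝ := ∑ k ∈ Finset.Icc n i, Ee N i T k

/-- Direction vectors of `Er`. -/
def vv (N i n : ℕ) : ES N := vec N (N + n - i - 1) n - vec N (N + n - i - 1) (n - 1)

/-- The vector field of `Er`. -/
def Wr (N i : ℕ) (S : ES N) : ES N := ∑ n ∈ Finset.Icc 1 i, Cc N i S n • vv N i n

/-- `F_k` exponential factors appearing in `El`. -/
def Ff (N j : ℕ) (T : ES N) (k : ℕ) : ℝ :=
  Real.exp (tvL N k j T - tvL N (k + 1) (j + 1) T)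

/-- Tail sums of the `F` factors. -/
def Pp (N j : ℕ) (T : ES N) (a : ℕ) : ℝ := ∑ k ∈ Finset.Icc a (N - 1), Ff N j T k

/-- Direction vectors of `El`. -/
def Uu (N j k : ℕ) : ES N := ∑ s ∈ Finset.Icc j k, (vec N s (j + 1) - vec N s j)

/-- The vector field of `El`. -/
def Wl (N j : ℕ) (S : ES N) : ES N := ∑ k ∈ Finset.Icc j (N - 1), Ff N j S k • Uu N j k

/-- The zeroth-order coefficient of `El`. -/
def clc (N : ℕ) (μ : ℕ → ℂ) (j : ℕ) (S : ES N) : ℂ := Pp N j S j • (μ j - μ (j + 1))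

/-- The (constant) direction vector of `Ed`. -/
def VdV (N i : ℕ) : ES N :=
  (∑ k ∈ Finset.Icc 1 (i - 1), vec N (N + k - i) k) - ∑ k ∈ Finset.Icc i (N - 1), vec N k i

def Vsum (N i m : ℕ) : ES N := ∑ n ∈ Finset.Icc 1 m, vv N i n

lemma Cc_zero (i n : ℕ) (T : ES N) (h : i < n) : Cc N i T n = 0 := by
  rw [Cc, Finset.Icc_eq_empty (by omega), Finset.sum_empty]

lemma Er_eq (N i : ℕ) (g : ES N → ℂ) (T : ES N) :
    Er N i g T = fderiv ℝ g T (Wr N i T) := by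
  unfold Er Wr
  rw [map_sum]
  refine Finset.sum_congr rfl fun n hn => ?_
  rw [map_smul, Complex.real_smul, vv, map_sub, pd_eq, pd_eq]
  congr 1
  rw [Cc, Complex.ofReal_sum]
  refine Finset.sum_congr rfl fun k hk => ?_
  rw [Ee, tv_eq, tv_eq]

lemma El_eq (N : ℕ) (μ : ℕ → ℂ) (j : ℕ) (g : ES N → ℂ) (T : ES N) :
    El N μ j g T = fderiv ℝ g T (Wl N j T) + clc N μ j T * g T := by
  have step1 : El N μ j g T = ∑ k ∈ Finset.Icc j (N - 1),
      (Ff N j T k • ((fderiv ℝ g) T (Uu N j k)) + Ff N j T k • ((μ j - μ (j + 1)) * g T)) := by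
    unfold El
    refine Finset.sum_congr rfl fun k hk => ?_
    rw [Uu, map_sum, Ff, tv_eq, tv_eq]
    simp only [map_sub, pd_eq, Complex.real_smul]
    rw [Finset.sum_sub_distrib]
    push_cast
    ring
  rw [step1, Finset.sum_add_distrib]
  congr 1
  · rw [Wl, map_sum]
    exact (Finset.sum_congr rfl fun k hk => (map_smul _ _ _).symm)
  · rw [← Finset.sum_smul, clc, Pp, smul_mul_assoc]

lemma Ed_eq (N : ℕ) (μ : ℕ → ℂ) (i : ℕ) (g : ES N → ℂ) (T : ES N) :
    Ed N μ i g T = μ i * g T + fderiv ℝ g T (VdV N i) := by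
  unfold Ed VdV
  rw [map_sub, map_sum, map_sum]
  simp only [pd_eq]
  ring

lemma hasFDerivAt_Ff (N j : ℕ) (T : ES N) (k : ℕ) :
    HasFDerivAt (fun S => Ff N j S k) (Ff N j T k • (tvL N k j - tvL N (k + 1) (j + 1))) T := by
  have h : HasFDerivAt (fun S : ES N => tvL N k j S - tvL N (k + 1) (j + 1) S)
      (tvL N k j - tvL N (k + 1) (j + 1)) T := by
    simpa using ((tvL N k j).hasFDerivAt (x := T)).fun_sub ((tvL N (k + 1) (j + 1)).hasFDerivAt (x := T))
  exact h.exp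

lemma hasFDerivAt_Ee (N i : ℕ) (T : ES N) (k : ℕ) :
    HasFDerivAt (fun S => Ee N i S k)
      (Ee N i T k • (tvL N (N + k - i) k - tvL N (N + k - i - 1) k)) T := by
  have h : HasFDerivAt (fun S : ES N => tvL N (N + k - i) k S - tvL N (N + k - i - 1) k S)
      (tvL N (N + k - i) k - tvL N (N + k - i - 1) k) T := by
    simpa using ((tvL N (N + k - i) k).hasFDerivAt (x := T)).fun_sub
      ((tvL N (N + k - i - 1) k).hasFDerivAt (x := T))
  exact h.exp

lemma hasFDerivAt_Wl (N j : ℕ) (T : ES N) :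
    HasFDerivAt (Wl N j)
      (∑ k ∈ Finset.Icc j (N - 1),
        (Ff N j T k • (tvL N k j - tvL N (k + 1) (j + 1))).smulRight (Uu N j k)) T := by
  unfold Wl
  exact HasFDerivAt.fun_sum fun k _ => (hasFDerivAt_Ff N j T k).smul_const (Uu N j k)

lemma hasFDerivAt_Cc (N i : ℕ) (T : ES N) (n : ℕ) :
    HasFDerivAt (fun S => Cc N i S n)
      (∑ k ∈ Finset.Icc n i, Ee N i T k • (tvL N (N + k - i) k - tvL N (N + k - i - 1) k)) T := by
  unfold Cc
  exact HasFDerivAt.fun_sum fun k _ => hasFDerivAt_Ee N i T k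

lemma hasFDerivAt_Wr (N i : ℕ) (T : ES N) :
    HasFDerivAt (Wr N i)
      (∑ n ∈ Finset.Icc 1 i,
        (∑ k ∈ Finset.Icc n i, Ee N i T k • (tvL N (N + k - i) k - tvL N (N + k - i - 1) k)).smulRight
          (vv N i n)) T := by
  unfold Wr
  exact HasFDerivAt.fun_sum fun n _ => (hasFDerivAt_Cc N i T n).smul_const (vv N i n)

lemma hasFDerivAt_Pp (N j : ℕ) (T : ES N) (a : ℕ) :
    HasFDerivAt (fun S => Pp N j S a)
      (∑ k ∈ Finset.Icc a (N - 1), Ff N j T k • (tvL N k j - tvL N (k + 1) (j + 1))) T := by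
  unfold Pp
  exact HasFDerivAt.fun_sum fun k _ => hasFDerivAt_Ff N j T k

lemma hasFDerivAt_clc (N : ℕ) (μ : ℕ → ℂ) (j : ℕ) (T : ES N) :
    HasFDerivAt (clc N μ j)
      ((∑ k ∈ Finset.Icc j (N - 1), Ff N j T k • (tvL N k j - tvL N (k + 1) (j + 1))).smulRight
        (μ j - μ (j + 1))) T := by
  unfold clc
  exact (hasFDerivAt_Pp N j T j).smul_const (μ j - μ (j + 1))

lemma fderiv_Wl_apply (N j : ℕ) (T w : ES N) :
    fderiv ℝ (Wl N j) T w = ∑ k ∈ Finset.Icc j (N - 1),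
      (Ff N j T k * (tvL N k j w - tvL N (k + 1) (j + 1) w)) • Uu N j k := by
  rw [(hasFDerivAt_Wl N j T).fderiv]
  simp [ContinuousLinearMap.sum_apply, ContinuousLinearMap.smulRight_apply,
    ContinuousLinearMap.smul_apply, ContinuousLinearMap.sub_apply, smul_eq_mul]

lemma fderiv_Wr_apply (N i : ℕ) (T w : ES N) :
    fderiv ℝ (Wr N i) T w = ∑ n ∈ Finset.Icc 1 i,
      (∑ k ∈ Finset.Icc n i, Ee N i T k * (tvL N (N + k - i) k w - tvL N (N + k - i - 1) k w)) •
        vv N i n := by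
  rw [(hasFDerivAt_Wr N i T).fderiv]
  simp [ContinuousLinearMap.sum_apply, ContinuousLinearMap.smulRight_apply,
    ContinuousLinearMap.smul_apply, ContinuousLinearMap.sub_apply, smul_eq_mul]

lemma fderiv_clc_apply (N : ℕ) (μ : ℕ → ℂ) (j : ℕ) (T w : ES N) :
    fderiv ℝ (clc N μ j) T w =
      (∑ k ∈ Finset.Icc j (N - 1), Ff N j T k * (tvL N k j w - tvL N (k + 1) (j + 1) w)) •
        (μ j - μ (j + 1)) := by
  rw [(hasFDerivAt_clc N μ j T).fderiv]
  simp [ContinuousLinearMap.smulRight_apply, ContinuousLinearMap.sum_apply,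
    ContinuousLinearMap.smul_apply, ContinuousLinearMap.sub_apply, smul_eq_mul]

end GGaux

namespace GGaux

lemma tvL_Wr (N i : ℕ) (T : ES N) (a b : ℕ) (hb : 1 ≤ b) (hi2 : i ≤ N - 1) (hN : 2 ≤ N) :
    tvL N a b (Wr N i T) =
      (if b ≤ i ∧ a = N + b - i - 1 then Cc N i T b else 0)
      - (if b + 1 ≤ i ∧ a = N + b - i then Cc N i T (b + 1) else 0) := by
  unfold Wr
  rw [map_sum]
  have key : ∀ n ∈ Finset.Icc 1 i,
      tvL N a b (Cc N i T n • vv N i n)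
        = (if n = b then (if b ≤ i ∧ a = N + b - i - 1 then Cc N i T b else 0) else 0)
          - (if n = b + 1 then (if b + 1 ≤ i ∧ a = N + b - i then Cc N i T (b + 1) else 0) else 0) := by
    intro n hn
    rw [Finset.mem_Icc] at hn
    rw [map_smul, vv, map_sub, tvL_vec, tvL_vec, smul_sub]
    congr 1
    · by_cases h : a = N + n - i - 1 ∧ b = n ∧ 1 ≤ b ∧ b ≤ a ∧ a ≤ N - 1
      · obtain ⟨ha, hbn, hv⟩ := h
        rw [if_pos ⟨ha, hbn, hv⟩, smul_eq_mul, mul_one, if_pos hbn.symm,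
          if_pos ⟨by omega, by omega⟩, hbn]
      · rw [if_neg h, smul_zero]
        by_cases hnb : n = b
        · rw [if_pos hnb, if_neg]
          rintro ⟨hc1, hc2⟩
          exact h ⟨by omega, by omega, by omega, by omega, by omega⟩
        · rw [if_neg hnb]
    · by_cases h : a = N + n - i - 1 ∧ b = n - 1 ∧ 1 ≤ b ∧ b ≤ a ∧ a ≤ N - 1
      · obtain ⟨ha, hbn, hv⟩ := h
        have hn1 : n = b + 1 := by omega
        rw [if_pos ⟨ha, hbn, hv⟩, smul_eq_mul, mul_one, if_pos hn1,
          if_pos ⟨by omega, by omega⟩, hn1]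
      · rw [if_neg h, smul_zero]
        by_cases hnb : n = b + 1
        · rw [if_pos hnb, if_neg]
          rintro ⟨hc1, hc2⟩
          exact h ⟨by omega, by omega, by omega, by omega, by omega⟩
        · rw [if_neg hnb]
  rw [Finset.sum_congr rfl key, Finset.sum_sub_distrib, Finset.sum_ite_eq', Finset.sum_ite_eq']
  congr 1
  · by_cases hbi : b ≤ i
    · rw [if_pos (Finset.mem_Icc.mpr ⟨hb, hbi⟩)]
    · rw [if_neg (by simp only [Finset.mem_Icc]; omega), if_neg (fun hc => hbi hc.1)]
  · by_cases hbi : b + 1 ≤ i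
    · rw [if_pos (Finset.mem_Icc.mpr ⟨by omega, hbi⟩)]
    · rw [if_neg (by simp only [Finset.mem_Icc]; omega), if_neg (fun hc => hbi hc.1)]

lemma tvL_Uu (N j a b k : ℕ) (hj : 1 ≤ j) (hk : k ≤ N - 1) :
    tvL N a b (Uu N j k) =
      (if b = j + 1 ∧ j + 1 ≤ a then (if a ≤ k then (1:ℝ) else 0) else 0)
      - (if b = j ∧ j ≤ a then (if a ≤ k then (1:ℝ) else 0) else 0) := by
  unfold Uu
  rw [map_sum]
  have key : ∀ s ∈ Finset.Icc j k,
      tvL N a b (vec N s (j + 1) - vec N s j)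
        = (if s = a then (if b = j + 1 ∧ j + 1 ≤ a then (if a ≤ k then (1:ℝ) else 0) else 0) else 0)
          - (if s = a then (if b = j ∧ j ≤ a then (if a ≤ k then (1:ℝ) else 0) else 0) else 0) := by
    intro s hs
    rw [Finset.mem_Icc] at hs
    rw [map_sub, tvL_vec, tvL_vec]
    congr 1
    · by_cases h : a = s ∧ b = j + 1 ∧ 1 ≤ b ∧ b ≤ a ∧ a ≤ N - 1
      · obtain ⟨has, hbj, hv⟩ := h
        rw [if_pos ⟨has, hbj, hv⟩, if_pos has.symm, if_pos ⟨hbj, by omega⟩, if_pos (by omega)]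
      · rw [if_neg h]
        by_cases hsa : s = a
        · rw [if_pos hsa]
          by_cases hc : b = j + 1 ∧ j + 1 ≤ a
          · rw [if_pos hc]
            by_cases hak : a ≤ k
            · exact absurd ⟨hsa.symm, hc.1, by omega, by omega, by omega⟩ h
            · rw [if_neg hak]
          · rw [if_neg hc]
        · rw [if_neg hsa]
    · by_cases h : a = s ∧ b = j ∧ 1 ≤ b ∧ b ≤ a ∧ a ≤ N - 1
      · obtain ⟨has, hbj, hv⟩ := h
        rw [if_pos ⟨has, hbj, hv⟩, if_pos has.symm, if_pos ⟨hbj, by omega⟩, if_pos (by omega)]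
      · rw [if_neg h]
        by_cases hsa : s = a
        · rw [if_pos hsa]
          by_cases hc : b = j ∧ j ≤ a
          · rw [if_pos hc]
            by_cases hak : a ≤ k
            · exact absurd ⟨hsa.symm, hc.1, by omega, by omega, by omega⟩ h
            · rw [if_neg hak]
          · rw [if_neg hc]
        · rw [if_neg hsa]
  rw [Finset.sum_congr rfl key, Finset.sum_sub_distrib, Finset.sum_ite_eq', Finset.sum_ite_eq']
  congr 1
  · by_cases hmem : a ∈ Finset.Icc j k
    · rw [if_pos hmem]
    · rw [Finset.mem_Icc] at hmem
      rw [if_neg (by rw [Finset.mem_Icc]; omega)]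
      by_cases hc : b = j + 1 ∧ j + 1 ≤ a
      · rw [if_pos hc, if_neg (by omega)]
      · rw [if_neg hc]
  · by_cases hmem : a ∈ Finset.Icc j k
    · rw [if_pos hmem]
    · rw [Finset.mem_Icc] at hmem
      rw [if_neg (by rw [Finset.mem_Icc]; omega)]
      by_cases hc : b = j ∧ j ≤ a
      · rw [if_pos hc, if_neg (by omega)]
      · rw [if_neg hc]

lemma tvL_Wl (N j : ℕ) (T : ES N) (a b : ℕ) (hj : 1 ≤ j) :
    tvL N a b (Wl N j T) =
      (if b = j + 1 ∧ j + 1 ≤ a then Pp N j T a else 0)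
      - (if b = j ∧ j ≤ a then Pp N j T a else 0) := by
  unfold Wl
  rw [map_sum]
  have key : ∀ k ∈ Finset.Icc j (N - 1),
      tvL N a b (Ff N j T k • Uu N j k)
        = (if b = j + 1 ∧ j + 1 ≤ a then (if a ≤ k then Ff N j T k else 0) else 0)
          - (if b = j ∧ j ≤ a then (if a ≤ k then Ff N j T k else 0) else 0) := by
    intro k hk
    rw [Finset.mem_Icc] at hk
    rw [map_smul, tvL_Uu N j a b k hj hk.2, smul_sub]
    simp only [smul_eq_mul, mul_ite, mul_one, mul_zero]
  rw [Finset.sum_congr rfl key, Finset.sum_sub_distrib]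
  congr 1
  · by_cases hc : b = j + 1 ∧ j + 1 ≤ a
    · simp only [if_pos hc]
      rw [sum_ite_ge (N - 1) j a (by omega) (Ff N j T), Pp]
    · simp only [if_neg hc, Finset.sum_const_zero]
  · by_cases hc : b = j ∧ j ≤ a
    · simp only [if_pos hc]
      rw [sum_ite_ge (N - 1) j a (by omega) (Ff N j T), Pp]
    · simp only [if_neg hc, Finset.sum_const_zero]

end GGaux

namespace GGaux

lemma claimA {M : Type*} [AddCommGroup M] [Module ℝ M]
    (N i j : ℕ) (T : ES N) (hN : 2 ≤ N) (hi1 : 1 ≤ i) (hi2 : i ≤ N - 1)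
    (hj1 : 1 ≤ j) (hj2 : j ≤ N - 1) (P : ℕ → M) :
    ∑ k ∈ Finset.Icc j (N - 1),
        (Ff N j T k * (tvL N k j (Wr N i T) - tvL N (k + 1) (j + 1) (Wr N i T))) • P k
      = (if j ≤ i then (Ee N i T j * Ff N j T (N + j - i - 1)) • P (N + j - i - 1) else 0)
        - (if j + 1 ≤ i then (Ee N i T (j + 1) * Ff N j T (N + j - i)) • P (N + j - i) else 0) := by
  by_cases hji : j ≤ i
  case neg =>
    rw [if_neg hji, if_neg (by omega), sub_zero]
    apply Finset.sum_eq_zero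
    intro k hk
    rw [Finset.mem_Icc] at hk
    rw [tvL_Wr N i T k j hj1 hi2 hN, tvL_Wr N i T (k + 1) (j + 1) (by omega) hi2 hN]
    rw [if_neg (show ¬(j ≤ i ∧ k = N + j - i - 1) by omega),
      if_neg (show ¬(j + 1 ≤ i ∧ k = N + j - i) by omega),
      if_neg (show ¬(j + 1 ≤ i ∧ k + 1 = N + (j + 1) - i - 1) by omega),
      if_neg (show ¬(j + 1 + 1 ≤ i ∧ k + 1 = N + (j + 1) - i) by omega)]
    simp
  case pos =>
    have key : ∀ k ∈ Finset.Icc j (N - 1),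
        (Ff N j T k * (tvL N k j (Wr N i T) - tvL N (k + 1) (j + 1) (Wr N i T))) • P k
          = (if k = N + j - i - 1 then
              (Ff N j T (N + j - i - 1) * (Cc N i T j - Cc N i T (j + 1))) • P (N + j - i - 1) else 0)
            + (if k = N + j - i then
              (Ff N j T (N + j - i) * (Cc N i T (j + 2) - Cc N i T (j + 1))) • P (N + j - i) else 0) := by
      intro k hk
      rw [Finset.mem_Icc] at hk
      rw [tvL_Wr N i T k j hj1 hi2 hN, tvL_Wr N i T (k + 1) (j + 1) (by omega) hi2 hN]
      by_cases hkA : k = N + j - i - 1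
      · rw [if_pos (show j ≤ i ∧ k = N + j - i - 1 from ⟨hji, hkA⟩),
          if_neg (show ¬(j + 1 ≤ i ∧ k = N + j - i) by omega),
          if_neg (show ¬(j + 1 + 1 ≤ i ∧ k + 1 = N + (j + 1) - i) by omega)]
        by_cases hj1i : j + 1 ≤ i
        · rw [if_pos (show j + 1 ≤ i ∧ k + 1 = N + (j + 1) - i - 1 from ⟨hj1i, by omega⟩)]
          rw [if_pos hkA, if_neg (show ¬(k = N + j - i) by omega), hkA, add_zero]
          congr 1
          ring
        · rw [if_neg (show ¬(j + 1 ≤ i ∧ k + 1 = N + (j + 1) - i - 1) by omega)]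
          rw [if_pos hkA, if_neg (show ¬(k = N + j - i) by omega), hkA, add_zero,
            Cc_zero i (j + 1) T (by omega)]
          congr 1
          ring
      · by_cases hkB : k = N + j - i
        · have hj1i : j + 1 ≤ i := by omega
          rw [if_neg (show ¬(j ≤ i ∧ k = N + j - i - 1) by omega),
            if_pos (show j + 1 ≤ i ∧ k = N + j - i from ⟨hj1i, hkB⟩),
            if_neg (show ¬(j + 1 ≤ i ∧ k + 1 = N + (j + 1) - i - 1) by omega)]
          rw [if_neg hkA, if_pos hkB, hkB, zero_add]
          by_cases hj2i : j + 2 ≤ i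
          · rw [if_pos (show j + 1 + 1 ≤ i ∧ N + j - i + 1 = N + (j + 1) - i from ⟨hj2i, by omega⟩),
              show Cc N i T (j + 1 + 1) = Cc N i T (j + 2) from rfl]
            congr 1
            ring
          · rw [if_neg (show ¬(j + 1 + 1 ≤ i ∧ N + j - i + 1 = N + (j + 1) - i) by omega),
              Cc_zero i (j + 2) T (by omega)]
            congr 1
            ring
        · rw [if_neg (show ¬(j ≤ i ∧ k = N + j - i - 1) by omega),
            if_neg (show ¬(j + 1 ≤ i ∧ k = N + j - i) by omega),
            if_neg (show ¬(j + 1 ≤ i ∧ k + 1 = N + (j + 1) - i - 1) by omega),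
            if_neg (show ¬(j + 1 + 1 ≤ i ∧ k + 1 = N + (j + 1) - i) by omega),
            if_neg hkA, if_neg hkB]
          simp
    rw [Finset.sum_congr rfl key, Finset.sum_add_distrib, Finset.sum_ite_eq', Finset.sum_ite_eq']
    rw [if_pos (Finset.mem_Icc.mpr (show j ≤ N + j - i - 1 ∧ N + j - i - 1 ≤ N - 1 by omega))]
    rw [if_pos hji]
    have hCj : Cc N i T j = Ee N i T j + Cc N i T (j + 1) := by
      rw [Cc, Cc, sum_Icc_bot hji]
    by_cases hj1i : j + 1 ≤ i
    · rw [if_pos (Finset.mem_Icc.mpr (show j ≤ N + j - i ∧ N + j - i ≤ N - 1 by omega))]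
      rw [if_pos hj1i]
      have hCj1 : Cc N i T (j + 1) = Ee N i T (j + 1) + Cc N i T (j + 2) := by
        rw [Cc, Cc, sum_Icc_bot hj1i]
      have c1 : Ff N j T (N + j - i - 1) * (Cc N i T j - Cc N i T (j + 1))
          = Ee N i T j * Ff N j T (N + j - i - 1) := by rw [hCj]; ring
      have c2 : Ff N j T (N + j - i) * (Cc N i T (j + 2) - Cc N i T (j + 1))
          = -(Ee N i T (j + 1) * Ff N j T (N + j - i)) := by rw [hCj1]; ring
      rw [c1, c2, neg_smul]
      exact (sub_eq_add_neg _ _).symm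
    · rw [if_neg (by rw [Finset.mem_Icc]; omega), if_neg hj1i]
      have c1 : Ff N j T (N + j - i - 1) * (Cc N i T j - Cc N i T (j + 1))
          = Ee N i T j * Ff N j T (N + j - i - 1) := by rw [hCj]; ring
      rw [c1, add_zero, sub_zero]

lemma dm_eq (N i j m : ℕ) (T : ES N) (hN : 2 ≤ N) (hi2 : i ≤ N - 1) (hj1 : 1 ≤ j)
    (hm1 : 1 ≤ m) (hmi : m ≤ i) :
    tvL N (N + m - i) m (Wl N j T) - tvL N (N + m - i - 1) m (Wl N j T)
      = (if m = j then Ff N j T (N + j - i - 1) else 0)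
        - (if m = j + 1 then Ff N j T (N + j - i) else 0) := by
  rw [tvL_Wl N j T _ m hj1, tvL_Wl N j T _ m hj1]
  by_cases hmj : m = j
  · rw [if_neg (by omega), if_pos ⟨hmj, by omega⟩, if_neg (by omega), if_pos ⟨hmj, by omega⟩]
    rw [if_pos hmj, if_neg (by omega)]
    have hPp : Pp N j T (N + m - i - 1) = Ff N j T (N + m - i - 1) + Pp N j T (N + m - i) := by
      rw [Pp, Pp, sum_Icc_bot (show N + m - i - 1 ≤ N - 1 by omega),
        show N + m - i - 1 + 1 = N + m - i from by omega]
    rw [hPp, show N + m - i - 1 = N + j - i - 1 from by omega]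
    ring
  · by_cases hmj1 : m = j + 1
    · rw [if_pos ⟨hmj1, by omega⟩, if_neg (by omega), if_pos ⟨hmj1, by omega⟩, if_neg (by omega)]
      rw [if_neg hmj, if_pos hmj1]
      have hPp : Pp N j T (N + m - i - 1) = Ff N j T (N + m - i - 1) + Pp N j T (N + m - i) := by
        rw [Pp, Pp, sum_Icc_bot (show N + m - i - 1 ≤ N - 1 by omega),
          show N + m - i - 1 + 1 = N + m - i from by omega]
      rw [hPp, show N + m - i - 1 = N + j - i from by omega]
      ring
    · rw [if_neg (by omega), if_neg (by omega), if_neg (by omega), if_neg (by omega),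
        if_neg hmj, if_neg hmj1]
      ring

lemma claimB (N i j : ℕ) (T : ES N) (hN : 2 ≤ N) (hi1 : 1 ≤ i) (hi2 : i ≤ N - 1)
    (hj1 : 1 ≤ j) (hj2 : j ≤ N - 1) :
    ∑ n ∈ Finset.Icc 1 i,
        (∑ m ∈ Finset.Icc n i,
          Ee N i T m * (tvL N (N + m - i) m (Wl N j T) - tvL N (N + m - i - 1) m (Wl N j T))) •
          vv N i n
      = (if j ≤ i then (Ee N i T j * Ff N j T (N + j - i - 1)) • Vsum N i j else 0)
        - (if j + 1 ≤ i then (Ee N i T (j + 1) * Ff N j T (N + j - i)) • Vsum N i (j + 1) else 0) := by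
  have inner : ∀ n ∈ Finset.Icc 1 i,
      (∑ m ∈ Finset.Icc n i,
          Ee N i T m * (tvL N (N + m - i) m (Wl N j T) - tvL N (N + m - i - 1) m (Wl N j T))) • vv N i n
        = ((if n ≤ j ∧ j ≤ i then Ee N i T j * Ff N j T (N + j - i - 1) else 0)
            - (if n ≤ j + 1 ∧ j + 1 ≤ i then Ee N i T (j + 1) * Ff N j T (N + j - i) else 0)) •
            vv N i n := by
    intro n hn
    rw [Finset.mem_Icc] at hn
    congr 1
    have key : ∀ m ∈ Finset.Icc n i,
        Ee N i T m * (tvL N (N + m - i) m (Wl N j T) - tvL N (N + m - i - 1) m (Wl N j T))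
          = (if m = j then Ee N i T j * Ff N j T (N + j - i - 1) else 0)
            - (if m = j + 1 then Ee N i T (j + 1) * Ff N j T (N + j - i) else 0) := by
      intro m hm
      rw [Finset.mem_Icc] at hm
      rw [dm_eq N i j m T hN hi2 hj1 (by omega) hm.2]
      by_cases hmj : m = j
      · rw [if_pos hmj, if_neg (by omega), if_pos hmj, if_neg (by omega), hmj]
        ring
      · by_cases hmj1 : m = j + 1
        · rw [if_neg hmj, if_pos hmj1, if_neg hmj, if_pos hmj1, hmj1]
          ring
        · rw [if_neg hmj, if_neg hmj1, if_neg hmj, if_neg hmj1]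
          ring
    rw [Finset.sum_congr rfl key, Finset.sum_sub_distrib, Finset.sum_ite_eq', Finset.sum_ite_eq']
    simp only [Finset.mem_Icc]
  rw [Finset.sum_congr rfl inner]
  simp only [sub_smul]
  rw [Finset.sum_sub_distrib]
  congr 1
  · by_cases hji : j ≤ i
    · rw [if_pos hji]
      have step : ∀ n ∈ Finset.Icc 1 i,
          (if n ≤ j ∧ j ≤ i then Ee N i T j * Ff N j T (N + j - i - 1) else 0) • vv N i n
            = (if n ≤ j then (Ee N i T j * Ff N j T (N + j - i - 1)) • vv N i n else 0) := by
        intro n hn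
        by_cases h : n ≤ j
        · rw [if_pos ⟨h, hji⟩, if_pos h]
        · rw [if_neg (fun hc => h hc.1), if_neg h, zero_smul]
      rw [Finset.sum_congr rfl step, sum_ite_le i j hji, Vsum, Finset.smul_sum]
    · rw [if_neg hji]
      apply Finset.sum_eq_zero
      intro n hn
      rw [if_neg (fun hc => hji hc.2), zero_smul]
  · by_cases hji : j + 1 ≤ i
    · rw [if_pos hji]
      have step : ∀ n ∈ Finset.Icc 1 i,
          (if n ≤ j + 1 ∧ j + 1 ≤ i then Ee N i T (j + 1) * Ff N j T (N + j - i) else 0) • vv N i n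
            = (if n ≤ j + 1 then (Ee N i T (j + 1) * Ff N j T (N + j - i)) • vv N i n else 0) := by
        intro n hn
        by_cases h : n ≤ j + 1
        · rw [if_pos ⟨h, hji⟩, if_pos h]
        · rw [if_neg (fun hc => h hc.1), if_neg h, zero_smul]
      rw [Finset.sum_congr rfl step, sum_ite_le i (j + 1) hji, Vsum, Finset.smul_sum]
    · rw [if_neg hji]
      apply Finset.sum_eq_zero
      intro n hn
      rw [if_neg (fun hc => hji hc.2), zero_smul]

end GGaux

namespace GGaux

lemma exp_eq_one (N i : ℕ) (T : ES N) (hN : 2 ≤ N) (hi1 : 1 ≤ i) (hi2 : i ≤ N - 1) :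
    Ee N i T i * Ff N i T (N + i - i - 1) = 1 := by
  rw [Ee, Ff, show N + i - i - 1 = N - 1 from by omega, show N + i - i = N from by omega,
    show N - 1 + 1 = N from by omega]
  rw [tvL_invalid N N i (by omega), tvL_invalid N N (i + 1) (by omega),
    ContinuousLinearMap.zero_apply]
  rw [← Real.exp_add, show (0:ℝ) - tvL N (N - 1) i T + (tvL N (N - 1) i T - 0) = 0 from by ring,
    Real.exp_zero]

lemma exp_eq (N i j : ℕ) (T : ES N) (hN : 2 ≤ N) (hi2 : i ≤ N - 1) (hj1 : 1 ≤ j)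
    (hj1i : j + 1 ≤ i) :
    Ee N i T j * Ff N j T (N + j - i - 1) = Ee N i T (j + 1) * Ff N j T (N + j - i) := by
  rw [Ee, Ee, Ff, Ff]
  rw [show N + (j + 1) - i - 1 = N + j - i from by omega,
    show N + (j + 1) - i = N + j - i + 1 from by omega,
    show N + j - i - 1 + 1 = N + j - i from by omega]
  rw [← Real.exp_add, ← Real.exp_add]
  congr 1
  ring

lemma Uu_succ (N j k : ℕ) (h : j ≤ k + 1) :
    Uu N j (k + 1) = Uu N j k + (vec N (k + 1) (j + 1) - vec N (k + 1) j) := by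
  rw [Uu, Uu, Finset.sum_Icc_succ_top h]

lemma Vsum_succ (N i m : ℕ) :
    Vsum N i (m + 1) = Vsum N i m + vv N i (m + 1) := by
  rw [Vsum, Vsum, Finset.sum_Icc_succ_top (by omega)]

lemma claimCvec (N i j : ℕ) (hN : 2 ≤ N) (hi2 : i ≤ N - 1) (hj1 : 1 ≤ j) (hj1i : j + 1 ≤ i) :
    Uu N j (N + j - i) - Vsum N i (j + 1) = Uu N j (N + j - i - 1) - Vsum N i j := by
  have hU := Uu_succ N j (N + j - i - 1) (by omega)
  rw [show N + j - i - 1 + 1 = N + j - i from by omega] at hU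
  have hV := Vsum_succ N i j
  have hvv : vv N i (j + 1) = vec N (N + j - i) (j + 1) - vec N (N + j - i) j := by
    rw [vv, show N + (j + 1) - i - 1 = N + j - i from by omega,
      show j + 1 - 1 = j from by omega]
  rw [hU, hV, hvv]
  abel

lemma claimD (N i : ℕ) (hN : 2 ≤ N) (hi1 : 1 ≤ i) (hi2 : i ≤ N - 1) :
    Uu N i (N - 1) - Vsum N i i = VdV N i - VdV N (i + 1) := by
  have hUu : Uu N i (N - 1)
      = (∑ s ∈ Finset.Icc (i + 1) (N - 1), vec N s (i + 1))
        - ∑ s ∈ Finset.Icc i (N - 1), vec N s i := by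
    rw [Uu, Finset.sum_sub_distrib]
    congr 1
    rw [sum_Icc_bot hi2, vec_invalid N i (i + 1) (by omega), zero_add]
  have hre : ∑ n ∈ Finset.Icc 1 i, vec N (N + n - i - 1) (n - 1)
      = ∑ k ∈ Finset.Icc 1 (i - 1), vec N (N + k - i) k := by
    rw [sum_Icc_bot hi1, show N + 1 - i - 1 = N - i from by omega,
      show (1:ℕ) - 1 = 0 from rfl, vec_invalid N (N - i) 0 (by omega), zero_add]
    have hmap : Finset.Icc (1 + 1) i
        = Finset.map ⟨fun k => k + 1, fun a b h => by simpa using h⟩ (Finset.Icc 1 (i - 1)) := by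
      ext x
      simp only [Finset.mem_map, Function.Embedding.coeFn_mk, Finset.mem_Icc]
      constructor
      · intro hx
        exact ⟨x - 1, by omega, by show x - 1 + 1 = x; omega⟩
      · rintro ⟨y, hy, rfl⟩
        show 1 + 1 ≤ y + 1 ∧ y + 1 ≤ i
        omega
    rw [hmap, Finset.sum_map]
    refine Finset.sum_congr rfl fun k hk => ?_
    rw [Finset.mem_Icc] at hk
    show vec N (N + (k + 1) - i - 1) (k + 1 - 1) = vec N (N + k - i) k
    rw [show k + 1 - 1 = k from by omega, show N + (k + 1) - i - 1 = N + k - i from by omega]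
  have hVs : Vsum N i i
      = (∑ n ∈ Finset.Icc 1 i, vec N (N + n - i - 1) n)
        - ∑ k ∈ Finset.Icc 1 (i - 1), vec N (N + k - i) k := by
    rw [Vsum]
    simp only [vv]
    rw [Finset.sum_sub_distrib, hre]
  have hVd1 : VdV N (i + 1)
      = (∑ n ∈ Finset.Icc 1 i, vec N (N + n - i - 1) n)
        - ∑ s ∈ Finset.Icc (i + 1) (N - 1), vec N s (i + 1) := by
    rw [VdV, show i + 1 - 1 = i from by omega]
    rfl
  have hVd : VdV N i
      = (∑ k ∈ Finset.Icc 1 (i - 1), vec N (N + k - i) k)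
        - ∑ s ∈ Finset.Icc i (N - 1), vec N s i := by
    rw [VdV]
  rw [hUu, hVs, hVd1, hVd]
  abel

end GGaux

namespace GGaux

lemma G1 (N i j : ℕ) (T : ES N) (hN : 2 ≤ N) (hi1 : 1 ≤ i) (hi2 : i ≤ N - 1)
    (hj1 : 1 ≤ j) (hj2 : j ≤ N - 1) :
    fderiv ℝ (Wl N j) T (Wr N i T) - fderiv ℝ (Wr N i) T (Wl N j T)
      = if i = j then VdV N i - VdV N (i + 1) else 0 := by
  rw [fderiv_Wl_apply, fderiv_Wr_apply]
  rw [claimA N i j T hN hi1 hi2 hj1 hj2 (Uu N j), claimB N i j T hN hi1 hi2 hj1 hj2]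
  by_cases hij : i = j
  · subst hij
    rw [if_pos rfl, if_pos (le_refl i), if_neg (show ¬(i + 1 ≤ i) by omega),
      if_pos (le_refl i), if_neg (show ¬(i + 1 ≤ i) by omega)]
    rw [sub_zero, sub_zero, ← smul_sub, exp_eq_one N i T hN hi1 hi2, one_smul,
      show N + i - i - 1 = N - 1 from by omega]
    exact claimD N i hN hi1 hi2
  · rw [if_neg hij]
    by_cases hji : j ≤ i
    · have hj1i : j + 1 ≤ i := by omega
      rw [if_pos hji, if_pos hj1i, if_pos hji, if_pos hj1i]
      rw [exp_eq N i j T hN hi2 hj1 hj1i]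
      have hd := eq_add_of_sub_eq (claimCvec N i j hN hi2 hj1 hj1i)
      rw [hd]
      simp only [smul_sub, smul_add]
      abel
    · rw [if_neg hji, if_neg (show ¬(j + 1 ≤ i) by omega), if_neg hji,
        if_neg (show ¬(j + 1 ≤ i) by omega)]
      simp

lemma G2 (N : ℕ) (μ : ℕ → ℂ) (i j : ℕ) (T : ES N) (hN : 2 ≤ N) (hi1 : 1 ≤ i)
    (hi2 : i ≤ N - 1) (hj1 : 1 ≤ j) (hj2 : j ≤ N - 1) :
    fderiv ℝ (clc N μ j) T (Wr N i T) = if i = j then μ i - μ (i + 1) else 0 := by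
  rw [fderiv_clc_apply]
  have hs := claimA (M := ℝ) N i j T hN hi1 hi2 hj1 hj2 (fun _ => (1 : ℝ))
  simp only [smul_eq_mul, mul_one] at hs
  rw [hs]
  by_cases hij : i = j
  · subst hij
    rw [if_pos (le_refl i), if_neg (show ¬(i + 1 ≤ i) by omega), sub_zero,
      exp_eq_one N i T hN hi1 hi2, if_pos rfl, one_smul]
  · rw [if_neg hij]
    by_cases hji : j ≤ i
    · have hj1i : j + 1 ≤ i := by omega
      rw [if_pos hji, if_pos hj1i, exp_eq N i j T hN hi2 hj1 hj1i, sub_self, zero_smul]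
    · rw [if_neg hji, if_neg (show ¬(j + 1 ≤ i) by omega), sub_zero, zero_smul]

end GGaux


open GGaux

/-- the commutation relation
`[E_{i,i+1}, E_{j+1,j}] = δ_{i,j} (E_{i,i} − E_{i+1,i+1})` for the Gauss–Givental operators. -/
theorem commutator_raise_lower (N : ℕ) (hN : 2 ≤ N) (μ : ℕ → ℂ)
    (f : ((Fin N × Fin N) → ℝ) → ℂ) (hf : ContDiff ℝ (⊤ : ℕ∞) f)
    (i j : ℕ) (hi1 : 1 ≤ i) (hi2 : i ≤ N - 1) (hj1 : 1 ≤ j) (hj2 : j ≤ N - 1)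
    (T : (Fin N × Fin N) → ℝ) :
    Er N i (fun S => El N μ j f S) T - El N μ j (fun S => Er N i f S) T
      = (((if i = j then 1 else 0) : ℂ)) * (Ed N μ i f T - Ed N μ (i + 1) f T) := by
  have hfd : Differentiable ℝ f := hf.differentiable (by simp)
  have hf' : ContDiff ℝ (⊤ : ℕ∞) (fderiv ℝ f) := hf.fderiv_right (by exact_mod_cast le_top)
  have hf'd : Differentiable ℝ (fderiv ℝ f) := hf'.differentiable (by simp)
  have hWl := hasFDerivAt_Wl N j T
  have hWr := hasFDerivAt_Wr N i T
  have hclc := hasFDerivAt_clc N μ j T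
  have hEl : (fun S => El N μ j f S)
      = fun S => fderiv ℝ f S (Wl N j S) + clc N μ j S * f S :=
    funext fun S => El_eq N μ j f S
  have hEr : (fun S => Er N i f S) = fun S => fderiv ℝ f S (Wr N i S) :=
    funext fun S => Er_eq N i f S
  rw [Er_eq N i _ T, El_eq N μ j _ T, hEl, hEr]
  have d1 : DifferentiableAt ℝ (fun S => fderiv ℝ f S (Wl N j S)) T :=
    (hf'd T).clm_apply hWl.differentiableAt
  have d2 : DifferentiableAt ℝ (fun S => clc N μ j S * f S) T :=
    hclc.differentiableAt.mul (hfd T)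
  rw [fderiv_fun_add d1 d2, ContinuousLinearMap.add_apply,
    fderiv_clm_apply (hf'd T) hWl.differentiableAt,
    fderiv_fun_mul hclc.differentiableAt (hfd T),
    fderiv_clm_apply (hf'd T) hWr.differentiableAt]
  simp only [ContinuousLinearMap.add_apply, ContinuousLinearMap.coe_comp', Function.comp_apply,
    ContinuousLinearMap.flip_apply, ContinuousLinearMap.smul_apply, smul_eq_mul]
  have hsymm : fderiv ℝ (fderiv ℝ f) T (Wr N i T) (Wl N j T)
      = fderiv ℝ (fderiv ℝ f) T (Wl N j T) (Wr N i T) :=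
    second_derivative_symmetric (fun y => (hfd y).hasFDerivAt) (hf'd T).hasFDerivAt _ _
  rw [hsymm]
  rw [G2 N μ i j T hN hi1 hi2 hj1 hj2]
  have hG1 : fderiv ℝ f T (fderiv ℝ (Wl N j) T (Wr N i T))
      - fderiv ℝ f T (fderiv ℝ (Wr N i) T (Wl N j T))
      = fderiv ℝ f T (if i = j then VdV N i - VdV N (i + 1) else 0) := by
    rw [← map_sub, G1 N i j T hN hi1 hi2 hj1 hj2]
  rw [Ed_eq N μ i f T, Ed_eq N μ (i + 1) f T, Er_eq N i f T]
  by_cases hij : i = j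
  · subst hij
    rw [if_pos rfl] at hG1
    rw [map_sub] at hG1
    rw [if_pos rfl, if_pos rfl]
    linear_combination hG1
  · rw [if_neg hij] at hG1
    rw [map_zero] at hG1
    rw [if_neg hij, if_neg hij]
    linear_combination hG1
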